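/- An odd prime p ≠ 7 can be written as p = a² + 7b² with integers a, b if and only if p ≡ j² (mod 14) for some j ∈ {1, 3, 5}. -/

import Mathlib

instance fact_prime_7 : Fact (Nat.Prime 7) := ⟨by norm_num⟩

theorem aux_isSquare (p : ℕ) (hp : p.Prime) (hmod : p % 14 = 1 ∨ p % 14 = 9 ∨ p % 14 = 11) :
    IsSquare (-7 : ZMod p) := by
  haveI : Fact p.Prime := ⟨hp⟩
  have hp2 : p ≠ 2 := by rintro rfl; omega
  have hp7 : p ≠ 7 := by rintro rfl; omega
  have hp7' : ((p : ℤ) : ZMod 7) ≠ 0 := by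
    intro hd
    rw [ZMod.intCast_zmod_eq_zero_iff_dvd] at hd
    exact hp7 ((Nat.prime_dvd_prime_iff_eq (by norm_num) hp).mp (by exact_mod_cast hd)).symm
  have h7p : legendreSym 7 (p : ℤ) = 1 := by
    rw [legendreSym.eq_one_iff _ hp7']
    have hc : ((p : ℤ) : ZMod 7) = ((p % 7 : ℕ) : ZMod 7) := by
      push_cast [ZMod.natCast_mod]; ring
    rw [hc]
    have : p % 7 = 1 ∨ p % 7 = 2 ∨ p % 7 = 4 := by omega
    rcases this with h | h | h <;> rw [h]
    · exact show IsSquare ((1:ℕ) : ZMod 7) from ⟨1, by decide⟩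
    · exact show IsSquare ((2:ℕ) : ZMod 7) from ⟨3, by decide⟩
    · exact show IsSquare ((4:ℕ) : ZMod 7) from ⟨2, by decide⟩
  have hrec := legendreSym.quadratic_reciprocity' (p := 7) (q := p) (by norm_num) hp2
  have hcast7 : ((7:ℕ):ℤ) = (7:ℤ) := by norm_num
  rw [hcast7] at hrec
  have hχ : legendreSym p (-1) = (-1 : ℤ) ^ (p / 2) := by
    rw [legendreSym.at_neg_one hp2, ZMod.χ₄_eq_neg_one_pow ((Nat.Prime.mod_two_eq_one_iff_ne_two hp).mpr hp2)]
  have hm7 : legendreSym p (-7) = 1 := by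
    have hsplit : (-7 : ℤ) = -1 * 7 := by norm_num
    rw [hsplit, legendreSym.mul, hχ, hrec, h7p]
    have h72 : (7:ℕ)/2 = 3 := by norm_num
    rw [h72, mul_one]
    rw [show (3 * (p/2)) = (p/2) + 2*(p/2) by ring, pow_add, pow_mul]
    norm_num
    rw [← pow_add]
    exact Even.neg_one_pow ⟨p/2, rfl⟩
  have hne : ((-7 : ℤ) : ZMod p) ≠ 0 := by
    intro hd
    rw [ZMod.intCast_zmod_eq_zero_iff_dvd] at hd
    have h1 : (p : ℤ) ∣ 7 := (dvd_neg (α := ℤ)).mp hd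
    have h2 : p ∣ 7 := by exact_mod_cast h1
    exact hp7 ((Nat.prime_dvd_prime_iff_eq hp (by norm_num)).mp h2)
  have := (legendreSym.eq_one_iff p hne).mp hm7
  simpa using this


lemma odd_sq_mod8 (x : ℤ) (h : x % 2 = 1) : x ^ 2 % 8 = 1 := by
  have hx : Odd x := Int.odd_iff.mpr h
  obtain ⟨a, rfl⟩ := hx
  obtain ⟨c, hc⟩ := Int.even_mul_succ_self a
  have h2 : (2*a+1)^2 = 8*c+1 := by linear_combination 4*hc
  omega

set_option maxHeartbeats 1000000 in
theorem aux_rep (p : ℕ) (hp : p.Prime)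
    (hmod : p % 14 = 1 ∨ p % 14 = 9 ∨ p % 14 = 11) :
    ∃ a b : ℤ, (p : ℤ) = a ^ 2 + 7 * b ^ 2 := by
  haveI : Fact p.Prime := ⟨hp⟩
  have hsq : IsSquare (-7 : ZMod p) := aux_isSquare p hp hmod
  obtain ⟨t, ht⟩ := hsq
  -- ht : -7 = t * t
  obtain ⟨n, hn⟩ : ∃ n, n = p.sqrt := ⟨_, rfl⟩
  have hn1 : p < (n+1) * (n+1) := by rw [hn]; exact Nat.lt_succ_sqrt p
  have hn0 : n * n ≤ p := by rw [hn]; exact Nat.sqrt_le p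
  have hn2 : n * n < p := by
    rcases Nat.lt_or_ge (n*n) p with h | h
    · exact h
    · exfalso
      have heq : n * n = p := le_antisymm hn0 h
      rcases (Nat.Prime.eq_one_or_self_of_dvd hp n ⟨n, heq.symm⟩) with h1 | h1
      · rw [h1] at heq; have := hp.two_le; omega
      · rw [h1] at heq; nlinarith [hp.two_le]
  -- pigeonhole
  have hcard : (Finset.univ : Finset (ZMod p)).card
      < ((Finset.range (n+1)) ×ˢ (Finset.range (n+1))).card := by
    rw [Finset.card_product, Finset.card_range, Finset.card_univ, ZMod.card]
    exact hn1
  obtain ⟨⟨i1, j1⟩, hm1, ⟨i2, j2⟩, hm2, hne, heq⟩ :=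
    Finset.exists_ne_map_eq_of_card_lt_of_maps_to hcard
      (fun q _ => Finset.mem_univ ((q.1 : ZMod p) - t * q.2))
  simp only [Finset.mem_product, Finset.mem_range] at hm1 hm2
  obtain ⟨x, hxdef⟩ : ∃ x : ℤ, x = (i1 : ℤ) - i2 := ⟨_, rfl⟩
  obtain ⟨y, hydef⟩ : ∃ y : ℤ, y = (j1 : ℤ) - j2 := ⟨_, rfl⟩
  have heq' : ((i1 : ZMod p)) - t * j1 = (i2 : ZMod p) - t * j2 := heq
  have hxy : ((x : ℤ) : ZMod p) = t * ((y : ℤ) : ZMod p) := by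
    rw [hxdef, hydef]
    push_cast
    linear_combination heq'
  have hdvd : (p : ℤ) ∣ x ^ 2 + 7 * y ^ 2 := by
    rw [← ZMod.intCast_zmod_eq_zero_iff_dvd]
    push_cast
    rw [hxy]
    linear_combination (7 + t * t) * (((y:ℤ) : ZMod p))^2 - ((y:ℤ):ZMod p)^2 * ht
  clear hxy heq heq' ht hcard
  have hnz : ¬ (x = 0 ∧ y = 0) := by
    rintro ⟨hx0, hy0⟩
    apply hne
    have e1 : i1 = i2 := by omega
    have e2 : j1 = j2 := by omega
    simp [Prod.ext_iff, e1, e2]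
  have hne0 : x ^ 2 + 7 * y ^ 2 ≠ 0 := by
    intro h0
    have hx2 : x ^ 2 = 0 := by nlinarith [sq_nonneg x, sq_nonneg y]
    have hy2 : y ^ 2 = 0 := by nlinarith [sq_nonneg x, sq_nonneg y]
    exact hnz ⟨pow_eq_zero_iff (two_ne_zero) |>.mp hx2, pow_eq_zero_iff (two_ne_zero) |>.mp hy2⟩
  have hpos : 0 < x ^ 2 + 7 * y ^ 2 :=
    lt_of_le_of_ne (by positivity) (Ne.symm hne0)
  have hxb : x ^ 2 ≤ (n:ℤ) * n := by
    have h := sq_le_sq' (show -(n:ℤ) ≤ x by omega) (show x ≤ (n:ℤ) by omega)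
    rw [pow_two ((n:ℤ))] at h
    linarith
  have hyb : y ^ 2 ≤ (n:ℤ) * n := by
    have h := sq_le_sq' (show -(n:ℤ) ≤ y by omega) (show y ≤ (n:ℤ) by omega)
    rw [pow_two ((n:ℤ))] at h
    linarith
  have hnn : (n:ℤ) * n < p := by exact_mod_cast hn2
  have hub : x ^ 2 + 7 * y ^ 2 < 8 * p := by nlinarith
  obtain ⟨k, hk⟩ := hdvd
  have hp0 : (0:ℤ) < p := by exact_mod_cast hp.pos
  have hk1 : 1 ≤ k := by nlinarith
  have hk7 : k ≤ 7 := by nlinarith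
  have hp2 : p % 2 = 1 := by omega
  have hp2' : (p:ℤ) % 2 = 1 := by omega
  interval_cases k
  -- k = 1
  · exact ⟨x, y, by linarith⟩
  -- k = 2
  · exfalso
    rcases Int.even_or_odd x with ⟨u, rfl⟩ | hxo <;> rcases Int.even_or_odd y with ⟨v, rfl⟩ | hyo
    · have h1 : (u+u)^2 = 4*u^2 := by ring
      have h2 : (v+v)^2 = 4*v^2 := by ring
      rw [h1, h2] at hk
      set U := u^2; set V := v^2
      omega
    · have hy1 : y^2 % 8 = 1 := odd_sq_mod8 y (Int.odd_iff.mp hyo)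
      have hx1 : (u+u)^2 = 4*u^2 := by ring
      rw [hx1] at hk
      set U := u^2; set Y := y^2
      omega
    · have hx1 : x^2 % 8 = 1 := odd_sq_mod8 x (Int.odd_iff.mp hxo)
      have hy1 : (v+v)^2 = 4*v^2 := by ring
      rw [hy1] at hk
      set X := x^2; set V := v^2
      omega
    · have hx1 : x^2 % 8 = 1 := odd_sq_mod8 x (Int.odd_iff.mp hxo)
      have hy1 : y^2 % 8 = 1 := odd_sq_mod8 y (Int.odd_iff.mp hyo)
      set X := x^2; set Y := y^2
      omega
  -- k = 3
  · exfalso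
    have h3 : ((x : ZMod 3))^2 + 7 * ((y : ZMod 3))^2 = 0 := by
      have := congrArg (fun z : ℤ => (z : ZMod 3)) hk
      push_cast at this
      rw [this, show ((3:ZMod 3) = 0) from rfl, mul_zero]
    have key : ∀ a b : ZMod 3, a^2 + 7*b^2 = 0 → a = 0 ∧ b = 0 := by decide
    obtain ⟨h3x, h3y⟩ := key _ _ h3
    rw [ZMod.intCast_zmod_eq_zero_iff_dvd] at h3x h3y
    obtain ⟨u, rfl⟩ := h3x
    obtain ⟨v, rfl⟩ := h3y
    have hk' : 9 * (u^2 + 7*v^2) = (p:ℤ) * 3 := by linear_combination hk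
    set S := u^2 + 7*v^2
    have : (p:ℤ) = 3 * S := by omega
    have hdp : (3:ℕ) ∣ p := by
      have : ((3:ℕ):ℤ) ∣ (p:ℕ) := ⟨S, this⟩
      exact_mod_cast this
    have := (Nat.prime_dvd_prime_iff_eq (by norm_num) hp).mp hdp
    omega
  -- k = 4
  · rcases Int.even_or_odd x with ⟨u, rfl⟩ | hxo <;> rcases Int.even_or_odd y with ⟨v, rfl⟩ | hyo
    · have h1 : (u+u)^2 = 4*u^2 := by ring
      have h2 : (v+v)^2 = 4*v^2 := by ring
      rw [h1, h2] at hk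
      refine ⟨u, v, ?_⟩
      set U := u^2; set V := v^2
      omega
    · exfalso
      have hy1 : y^2 % 8 = 1 := odd_sq_mod8 y (Int.odd_iff.mp hyo)
      have hx1 : (u+u)^2 = 4*u^2 := by ring
      rw [hx1] at hk
      set U := u^2; set Y := y^2
      omega
    · exfalso
      have hx1 : x^2 % 8 = 1 := odd_sq_mod8 x (Int.odd_iff.mp hxo)
      have hy1 : (v+v)^2 = 4*v^2 := by ring
      rw [hy1] at hk
      set X := x^2; set V := v^2
      omega
    · exfalso
      have hx1 : x^2 % 8 = 1 := odd_sq_mod8 x (Int.odd_iff.mp hxo)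
      have hy1 : y^2 % 8 = 1 := odd_sq_mod8 y (Int.odd_iff.mp hyo)
      set X := x^2; set Y := y^2
      omega
  -- k = 5
  · exfalso
    have h5 : ((x : ZMod 5))^2 + 7 * ((y : ZMod 5))^2 = 0 := by
      have := congrArg (fun z : ℤ => (z : ZMod 5)) hk
      push_cast at this
      rw [this, show ((5:ZMod 5) = 0) from rfl, mul_zero]
    have key : ∀ a b : ZMod 5, a^2 + 7*b^2 = 0 → a = 0 ∧ b = 0 := by decide
    obtain ⟨h5x, h5y⟩ := key _ _ h5
    rw [ZMod.intCast_zmod_eq_zero_iff_dvd] at h5x h5y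
    obtain ⟨u, rfl⟩ := h5x
    obtain ⟨v, rfl⟩ := h5y
    have hk' : 25 * (u^2 + 7*v^2) = (p:ℤ) * 5 := by linear_combination hk
    set S := u^2 + 7*v^2
    have : (p:ℤ) = 5 * S := by omega
    have hdp : (5:ℕ) ∣ p := by
      have : ((5:ℕ):ℤ) ∣ (p:ℕ) := ⟨S, this⟩
      exact_mod_cast this
    have := (Nat.prime_dvd_prime_iff_eq (by norm_num) hp).mp hdp
    omega
  -- k = 6
  · exfalso
    rcases Int.even_or_odd x with ⟨u, rfl⟩ | hxo <;> rcases Int.even_or_odd y with ⟨v, rfl⟩ | hyo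
    · have h1 : (u+u)^2 = 4*u^2 := by ring
      have h2 : (v+v)^2 = 4*v^2 := by ring
      rw [h1, h2] at hk
      set U := u^2; set V := v^2
      omega
    · have hy1 : y^2 % 8 = 1 := odd_sq_mod8 y (Int.odd_iff.mp hyo)
      have hx1 : (u+u)^2 = 4*u^2 := by ring
      rw [hx1] at hk
      set U := u^2; set Y := y^2
      omega
    · have hx1 : x^2 % 8 = 1 := odd_sq_mod8 x (Int.odd_iff.mp hxo)
      have hy1 : (v+v)^2 = 4*v^2 := by ring
      rw [hy1] at hk
      set X := x^2; set V := v^2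
      omega
    · have hx1 : x^2 % 8 = 1 := odd_sq_mod8 x (Int.odd_iff.mp hxo)
      have hy1 : y^2 % 8 = 1 := odd_sq_mod8 y (Int.odd_iff.mp hyo)
      set X := x^2; set Y := y^2
      omega
  -- k = 7
  · have h7 : ((x : ZMod 7))^2 + 7 * ((y : ZMod 7))^2 = 0 := by
      have := congrArg (fun z : ℤ => (z : ZMod 7)) hk
      push_cast at this
      rw [this, show ((7:ZMod 7) = 0) from rfl, mul_zero]
    have key : ∀ a b : ZMod 7, a^2 + 7*b^2 = 0 → a = 0 := by decide
    have h7x := key _ _ h7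
    rw [ZMod.intCast_zmod_eq_zero_iff_dvd] at h7x
    obtain ⟨u, rfl⟩ := h7x
    refine ⟨y, u, ?_⟩
    have hk' : 49 * u^2 + 7 * y^2 = (p:ℤ) * 7 := by linear_combination hk
    set U := u^2; set Y := y^2
    omega


theorem stmt_0 (p : ℕ) (hp : p.Prime) (hodd : Odd p) (h7 : p ≠ 7) :
    (∃ a b : ℤ, (p : ℤ) = a ^ 2 + 7 * b ^ 2) ↔
    (∃ j ∈ ({1, 3, 5} : Finset ℕ), p % 14 = j ^ 2 % 14) := by
  constructor
  · intro h
    obtain ⟨a, b, hab⟩ := h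
    have h2 : ¬ (2 ∣ p) := by
      rw [Nat.odd_iff] at hodd; omega
    have hu : IsUnit ((p : ℕ) : ZMod 14) := by
      rw [ZMod.isUnit_iff_coprime]
      have h14 : (14:ℕ) = 2 * 7 := by norm_num
      rw [h14]
      exact Nat.Coprime.mul_right
        ((Nat.coprime_primes hp (by norm_num)).mpr (by rintro rfl; exact h2 (by norm_num)))
        ((Nat.coprime_primes hp (by norm_num)).mpr h7)
    have hcast : ((p : ℕ) : ZMod 14) = (a : ZMod 14)^2 + 7 * (b : ZMod 14)^2 := by
      have := congrArg (fun z : ℤ => (z : ZMod 14)) hab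
      push_cast at this
      exact this
    have key : ∀ x y : ZMod 14, IsUnit (x^2 + 7*y^2) →
        x^2+7*y^2 = 1 ∨ x^2+7*y^2 = 9 ∨ x^2+7*y^2 = 11 := by decide
    have hval : p % 14 = ((p : ZMod 14)).val := by rw [ZMod.val_natCast]
    rw [hcast] at hu
    have hres : p % 14 = 1 ∨ p % 14 = 9 ∨ p % 14 = 11 := by
      rcases key _ _ hu with h | h | h <;> rw [hval, hcast, h] <;> decide
    rcases hres with h | h | h
    · exact ⟨1, by decide, by omega⟩
    · exact ⟨3, by decide, by omega⟩
    · exact ⟨5, by decide, by omega⟩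
  · intro h
    obtain ⟨j, hj, hje⟩ := h
    have hmod : p % 14 = 1 ∨ p % 14 = 9 ∨ p % 14 = 11 := by
      fin_cases hj <;> norm_num at hje <;> omega
    exact aux_rep p hp hmod
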